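/- Let d, p be positive integers, let θ_K, θ_V, θ_Q be p×d real matrices, and let x_1, …, x_T ∈ ℝ^d be an input sequence. Define the self-supervised loss ℓ(W; x) = ‖W(θ_K x) − θ_V x‖² for p×p matrices W, and consider the TTT layer with linear inner model f(x; W) = Wx, initialization W_0 = 0, learning rate η = 1/2, and batch gradient descent update rule W_t = W_0 − η ∑_{s=1}^t ∇_W ℓ(W_0; x_s) (gradient with respect to the Frobenius inner product). Then for every t ∈ {1, …, T}, the output token z_t = f(θ_Q x_t; W_t) = W_t (θ_Q x_t) satisfies z_t = ∑_{s=1}^t (θ_V x_s) (θ_K x_s)ᵀ (θ_Q x_t), which is the output of linear attention with keys θ_K x_s, values θ_V x_s, and queries θ_Q x_t. -/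

import Mathlib

open Matrix

attribute [local instance] Matrix.normedAddCommGroup Matrix.normedSpace

noncomputable def entryCLM (p : ℕ) (k : Fin p → ℝ) (i : Fin p) :
    Matrix (Fin p) (Fin p) ℝ →L[ℝ] ℝ :=
  LinearMap.toContinuousLinearMap
    { toFun := fun W => W.mulVec k i
      map_add' := by intro a b; simp [Matrix.add_mulVec]
      map_smul' := by intro c a; simp [Matrix.smul_mulVec] }

lemma grad_eq (p : ℕ) (k v : Fin p → ℝ) (G : Matrix (Fin p) (Fin p) ℝ)
    (φ : Matrix (Fin p) (Fin p) ℝ →L[ℝ] ℝ)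
    (hd : HasFDerivAt
        (fun W : Matrix (Fin p) (Fin p) ℝ => ∑ i, (W.mulVec k i - v i) ^ 2)
        φ (0 : Matrix (Fin p) (Fin p) ℝ))
    (hφ : ∀ H : Matrix (Fin p) (Fin p) ℝ, φ H = Matrix.trace (Gᵀ * H)) :
    G = (-2 : ℝ) • Matrix.vecMulVec v k := by
  set D : Matrix (Fin p) (Fin p) ℝ →L[ℝ] ℝ :=
    ∑ i, (-2 * v i) • entryCLM p k i with hD
  have hLi : ∀ i, HasFDerivAt (fun W : Matrix (Fin p) (Fin p) ℝ => W.mulVec k i)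
      (entryCLM p k i) 0 := fun i => (entryCLM p k i).hasFDerivAt
  have hD' : HasFDerivAt
      (fun W : Matrix (Fin p) (Fin p) ℝ => ∑ i, (W.mulVec k i - v i) ^ 2) D 0 := by
    rw [hD]
    apply HasFDerivAt.fun_sum
    intro i _
    have h1 : HasFDerivAt (fun W : Matrix (Fin p) (Fin p) ℝ => W.mulVec k i - v i)
        (entryCLM p k i) 0 := (hLi i).sub_const (v i)
    have h2 := h1.fun_mul h1
    have e0 : (fun W : Matrix (Fin p) (Fin p) ℝ => (W.mulVec k i - v i) ^ 2)
        = fun W => (W.mulVec k i - v i) * (W.mulVec k i - v i) := by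
      funext W; ring
    rw [e0]
    refine h2.congr_fderiv ?_
    have : Matrix.mulVec (0 : Matrix (Fin p) (Fin p) ℝ) k i - v i = -v i := by
      simp
    rw [this]
    ext W
    change (-v i) * entryCLM p k i W + (-v i) * entryCLM p k i W = (-2 * v i) * entryCLM p k i W
    ring
  have hφD : φ = D := hd.unique hD'
  ext a b
  have h := hφ (Matrix.single a b 1)
  rw [hφD] at h
  have hl : D (Matrix.single a b 1) = -2 * v a * k b := by
    rw [hD]
    simp only [ContinuousLinearMap.sum_apply, ContinuousLinearMap.smul_apply]
    have : ∀ i, entryCLM p k i (Matrix.single a b 1)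
        = if a = i then k b else 0 := by
      intro i
      simp only [entryCLM, LinearMap.coe_toContinuousLinearMap', LinearMap.coe_mk,
        AddHom.coe_mk]
      simp [Matrix.mulVec, Matrix.single, dotProduct, Finset.sum_ite_eq,
        ite_and]
    simp [this, Finset.sum_ite_eq, smul_eq_mul]
  have hr : Matrix.trace (Gᵀ * Matrix.single a b 1) = G a b := by
    simp [Matrix.trace, Matrix.mul_apply, Matrix.single, Matrix.diag,
      Finset.sum_ite_eq, ite_and]
  rw [hl, hr] at h
  simp [← h, Matrix.vecMulVec_apply]
  ring

/-- With the self-supervised loss `ℓ(W; x) = ‖W(θ_K x) − θ_V x‖²`,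
initialization `W₀ = 0`, learning rate `η = 1/2`, and batch gradient descent update
`W_t = W₀ − η ∑_{s=1}^t ∇_W ℓ(W₀; x_s)` (Frobenius gradient `G s`), every output token
`z_t = W_t (θ_Q x_t)` equals the linear-attention output
`∑_{s=1}^t (θ_V x_s)(θ_K x_s)ᵀ (θ_Q x_t)`. -/
theorem stmt_0 (d p T : ℕ) (hd : 0 < d) (hp : 0 < p)
    (θK θV θQ : Matrix (Fin p) (Fin d) ℝ)
    (x : ℕ → Fin d → ℝ)
    (G : ℕ → Matrix (Fin p) (Fin p) ℝ)
    (hG : ∀ s : ℕ, ∃ φ : Matrix (Fin p) (Fin p) ℝ →L[ℝ] ℝ,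
      HasFDerivAt
        (fun W : Matrix (Fin p) (Fin p) ℝ =>
          ∑ i, (W.mulVec (θK.mulVec (x s)) i - θV.mulVec (x s) i) ^ 2)
        φ (0 : Matrix (Fin p) (Fin p) ℝ) ∧
      ∀ H : Matrix (Fin p) (Fin p) ℝ, φ H = Matrix.trace ((G s)ᵀ * H))
    (W : ℕ → Matrix (Fin p) (Fin p) ℝ)
    (hW : ∀ t : ℕ, W t = (0 : Matrix (Fin p) (Fin p) ℝ)
      - (1 / 2 : ℝ) • ∑ s ∈ Finset.Icc 1 t, G s) :
    ∀ t : ℕ, 1 ≤ t → t ≤ T →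
      (W t).mulVec (θQ.mulVec (x t)) =
        ∑ s ∈ Finset.Icc 1 t,
          (Matrix.vecMulVec (θV.mulVec (x s)) (θK.mulVec (x s))).mulVec
            (θQ.mulVec (x t)) := by
  have hGs : ∀ s, G s = (-2 : ℝ) • Matrix.vecMulVec (θV.mulVec (x s)) (θK.mulVec (x s)) := by
    intro s
    obtain ⟨φ, h1, h2⟩ := hG s
    exact grad_eq p (θK.mulVec (x s)) (θV.mulVec (x s)) (G s) φ h1 h2
  intro t _ _
  have hWt : W t = ∑ s ∈ Finset.Icc 1 t,
      Matrix.vecMulVec (θV.mulVec (x s)) (θK.mulVec (x s)) := by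
    rw [hW t]
    rw [Finset.sum_congr rfl (fun s _ => hGs s)]
    rw [← Finset.smul_sum, smul_smul]
    norm_num
  rw [hWt]
  ext i
  simp only [Matrix.mulVec, dotProduct, Matrix.sum_apply, Finset.sum_apply,
    Finset.sum_mul]
  rw [Finset.sum_comm]
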